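/- Suppose the lower level set {x ∈ s : F(x) ≤ F(x⁰)} is bounded, and let {x^k} be generated by Algorithm 2. Then the sequence {x^k} has an accumulation point x* which is a stationary point (G(x*) = 0), and moreover lim_{k→∞} min_{0 ≤ l ≤ k} G(x^l) = 0. -/

import Mathlib

open scoped RealInnerProductSpace

/-- The Frank–Wolfe gap `G(x) = sup_{v ∈ s} (⟪∇f(x), x − v⟫ + g(x) − g(v))`. -/
noncomputable def FWgap {E : Type*} [NormedAddCommGroup E] [InnerProductSpace ℝ E] [CompleteSpace E]
    (f g : E → ℝ) (s : Set E) (x : E) : ℝ :=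
  ⨆ v : s, (⟪gradient f x, x - (v : E)⟫ + g x - g (v : E))


/-- Candidate Lipschitz estimate `L^{(i)} = 2^{i−1} · L_prev`. -/
noncomputable def Lcand (Lprev : ℝ) (i : ℕ) : ℝ := 2 ^ i * Lprev / 2

/-- Candidate stepsize `τ^{(i)} = min {1, G / (2 L^{(i)} ‖d‖²)}`. -/
noncomputable def tauCand (Gx Lprev nd2 : ℝ) (i : ℕ) : ℝ :=
  min 1 (Gx / (2 * Lcand Lprev i * nd2))

lemma descent_est {E : Type*} [NormedAddCommGroup E] [InnerProductSpace ℝ E] [CompleteSpace E]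
    {f : E → ℝ} {u : Set E} (hu : IsOpen u) (hf : ContDiffOn ℝ 1 f u)
    {x d : E} {τ C : ℝ} (hτ : 0 ≤ τ)
    (hseg : ∀ t ∈ Set.Icc (0:ℝ) τ, x + t • d ∈ u)
    (hC : ∀ t ∈ Set.Icc (0:ℝ) τ, ‖gradient f (x + t • d) - gradient f x‖ ≤ C) :
    f (x + τ • d) ≤ f x + τ * ⟪gradient f x, d⟫ + C * ‖d‖ * τ := by
  have hdiff : ∀ z ∈ u, DifferentiableAt ℝ f z := fun z hz =>
    (hf.differentiableOn one_ne_zero).differentiableAt (hu.mem_nhds hz)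
  set φ : ℝ → ℝ := fun t => f (x + t • d) - t * ⟪gradient f x, d⟫ with hφ
  have hder : ∀ t ∈ Set.Icc (0:ℝ) τ,
      HasDerivWithinAt φ (⟪gradient f (x + t • d) - gradient f x, d⟫) (Set.Icc 0 τ) t := by
    intro t ht
    have h1 : HasFDerivAt f (InnerProductSpace.toDual ℝ E (gradient f (x + t • d))) (x + t • d) :=
      ((hdiff _ (hseg t ht)).hasGradientAt).hasFDerivAt
    have h2 : HasDerivAt (fun t : ℝ => x + t • d) d t := by
      simpa using ((hasDerivAt_id t).smul_const d).const_add x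
    have h3 : HasDerivAt (fun t => f (x + t • d)) (⟪gradient f (x + t • d), d⟫) t := by
      exact h1.comp_hasDerivAt t h2
    have h4 : HasDerivAt φ (⟪gradient f (x + t • d), d⟫ - ⟪gradient f x, d⟫) t :=
      h3.sub (hasDerivAt_mul_const _)
    rw [inner_sub_left]
    exact h4.hasDerivWithinAt
  have hbound : ∀ t ∈ Set.Icc (0:ℝ) τ,
      ‖⟪gradient f (x + t • d) - gradient f x, d⟫‖ ≤ C * ‖d‖ := by
    intro t ht
    calc ‖⟪gradient f (x + t • d) - gradient f x, d⟫‖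
        ≤ ‖gradient f (x + t • d) - gradient f x‖ * ‖d‖ := norm_inner_le_norm _ _
      _ ≤ C * ‖d‖ := by nlinarith [hC t ht, norm_nonneg d]
  have hmvt := Convex.norm_image_sub_le_of_norm_hasDerivWithin_le hder hbound
    (convex_Icc 0 τ) (Set.left_mem_Icc.2 hτ) (Set.right_mem_Icc.2 hτ)
  have habs : |φ τ - φ 0| ≤ C * ‖d‖ * τ := by
    have : ‖φ τ - φ 0‖ ≤ C * ‖d‖ * ‖τ - 0‖ := hmvt
    simpa [abs_of_nonneg hτ, mul_assoc] using this
  have := (abs_le.1 habs).2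
  simp only [hφ, zero_smul, add_zero, zero_mul, sub_zero] at this
  linarith
set_option maxHeartbeats 2000000 in
/-- **Theorem: subsequential convergence of Algorithm 2.**
If the lower level set `{x ∈ s : F(x) ≤ F(x⁰)}` is bounded, then the sequence `{x^k}`
generated by Algorithm 2 has an accumulation point `x*` which is stationary
(`G(x*) = 0`), and `lim_{k→∞} min_{0 ≤ l ≤ k} G(x^l) = 0`. -/
theorem alg2_subsequential_convergence
    {E : Type*} [NormedAddCommGroup E] [InnerProductSpace ℝ E] [FiniteDimensional ℝ E]
    (s : Set E) (hs_ne : s.Nonempty) (hs_cl : IsClosed s) (hs_cv : Convex ℝ s)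
    (g : E → ℝ) (hg_cv : ConvexOn ℝ s g) (hg_lsc : LowerSemicontinuousOn g s)
    (hg_sc : ∀ M : ℝ, ∃ R : ℝ, ∀ z ∈ s, R ≤ ‖z‖ → M ≤ g z / ‖z‖)
    (f : E → ℝ) (hf : ∃ u : Set E, IsOpen u ∧ s ⊆ u ∧ ContDiffOn ℝ 1 f u)
    (hF_bdd : BddBelow ((fun z => f z + g z) '' s))
    (x v d : ℕ → E) (ik : ℕ → ℕ) (Lm τk : ℕ → ℝ)
    -- `Lm k` stands for `L_{k−1}` (so `Lm 0 = L_{−1} > 0` and `Lm (k+1) = L_k`).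
    (hLm0 : 0 < Lm 0)
    (hx0 : x 0 ∈ s)
    (hv : ∀ k, v k ∈ s ∧ ∀ w ∈ s,
      ⟪gradient f (x k), v k⟫ + g (v k) ≤ ⟪gradient f (x k), w⟫ + g w)
    (hd : ∀ k, d k = v k - x k)
    (hGpos : ∀ k, 0 < FWgap f g s (x k))
    (hik : ∀ k,
      (f (x k + tauCand (FWgap f g s (x k)) (Lm k) (‖d k‖ ^ 2) (ik k) • d k)
          + g (x k + tauCand (FWgap f g s (x k)) (Lm k) (‖d k‖ ^ 2) (ik k) • d k)
        ≤ (f (x k) + g (x k))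
          - (1 / 2) * tauCand (FWgap f g s (x k)) (Lm k) (‖d k‖ ^ 2) (ik k)
              * FWgap f g s (x k)
          + (1 / 2) * Lcand (Lm k) (ik k)
              * (tauCand (FWgap f g s (x k)) (Lm k) (‖d k‖ ^ 2) (ik k)) ^ 2 * ‖d k‖ ^ 2)
      ∧ ∀ j < ik k,
        ¬ (f (x k + tauCand (FWgap f g s (x k)) (Lm k) (‖d k‖ ^ 2) j • d k)
            + g (x k + tauCand (FWgap f g s (x k)) (Lm k) (‖d k‖ ^ 2) j • d k)
          ≤ (f (x k) + g (x k))
            - (1 / 2) * tauCand (FWgap f g s (x k)) (Lm k) (‖d k‖ ^ 2) j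
                * FWgap f g s (x k)
            + (1 / 2) * Lcand (Lm k) j
                * (tauCand (FWgap f g s (x k)) (Lm k) (‖d k‖ ^ 2) j) ^ 2 * ‖d k‖ ^ 2))
    (hτ : ∀ k, τk k = tauCand (FWgap f g s (x k)) (Lm k) (‖d k‖ ^ 2) (ik k))
    (hLsucc : ∀ k, Lm (k + 1) = Lcand (Lm k) (ik k))
    (hxsucc : ∀ k, x (k + 1) = x k + τk k • d k)
    (hlev : Bornology.IsBounded {z ∈ s | f z + g z ≤ f (x 0) + g (x 0)}) :
    (∃ xstar : E, (∃ φ : ℕ → ℕ, StrictMono φ ∧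
        Filter.Tendsto (fun k => x (φ k)) Filter.atTop (nhds xstar)) ∧
      FWgap f g s xstar = 0) ∧
    Filter.Tendsto
      (fun k => (Finset.range (k + 1)).inf' Finset.nonempty_range_add_one
        (fun l => FWgap f g s (x l)))
      Filter.atTop (nhds 0) := by
  classical
  obtain ⟨u, hu_open, hsu, hfC1⟩ := hf
  obtain ⟨m, hm⟩ := hF_bdd
  have hm' : ∀ z ∈ s, m ≤ f z + g z := fun z hz => hm ⟨z, hz, rfl⟩
  have hvs : ∀ k, v k ∈ s := fun k => (hv k).1
  haveI : Nonempty s := hs_ne.to_subtype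
  -- the sup defining the gap is attained at `v k`
  have hterm_le : ∀ k, ∀ w ∈ s, ⟪gradient f (x k), x k - w⟫ + g (x k) - g w
      ≤ ⟪gradient f (x k), x k - v k⟫ + g (x k) - g (v k) := by
    intro k w hw
    have := (hv k).2 w hw
    simp only [inner_sub_right] at *
    linarith
  have hbddk : ∀ k, BddAbove (Set.range fun w : s =>
      ⟪gradient f (x k), x k - (w:E)⟫ + g (x k) - g (w:E)) := by
    intro k
    refine ⟨⟪gradient f (x k), x k - v k⟫ + g (x k) - g (v k), ?_⟩
    rintro y ⟨w, rfl⟩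
    exact hterm_le k w w.2
  have hGle : ∀ k, ∀ w ∈ s, ⟪gradient f (x k), x k - w⟫ + g (x k) - g w
      ≤ FWgap f g s (x k) := by
    intro k w hw
    exact le_ciSup (hbddk k) ⟨w, hw⟩
  have hGeq : ∀ k, FWgap f g s (x k)
      = ⟪gradient f (x k), x k - v k⟫ + g (x k) - g (v k) := by
    intro k
    refine le_antisymm (ciSup_le fun w => hterm_le k w w.2) (hGle k (v k) (hvs k))
  have hLpos : ∀ k, 0 < Lm k := by
    intro k
    induction k with
    | zero => exact hLm0
    | succ n ih => rw [hLsucc n]; unfold Lcand; positivity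
  have hLcpos : ∀ k i, 0 < Lcand (Lm k) i := by
    intro k i; unfold Lcand; have := hLpos k; positivity
  have hdnz : ∀ k, d k ≠ 0 := by
    intro k hk0
    have hvx : v k = x k := by
      have := hd k; rw [hk0] at this; have := this.symm; rwa [sub_eq_zero] at this
    have := hGpos k
    rw [hGeq k, hvx] at this
    simp at this
  have hnd2 : ∀ k, 0 < ‖d k‖ ^ 2 := by
    intro k
    have : 0 < ‖d k‖ := norm_pos_iff.2 (hdnz k)
    positivity
  have hτc : ∀ k i, 0 < tauCand (FWgap f g s (x k)) (Lm k) (‖d k‖ ^ 2) i ∧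
      tauCand (FWgap f g s (x k)) (Lm k) (‖d k‖ ^ 2) i ≤ 1 := by
    intro k i
    constructor
    · unfold tauCand
      refine lt_min one_pos ?_
      exact div_pos (hGpos k) (by have := hLcpos k i; have := hnd2 k; positivity)
    · exact min_le_left _ _
  have hτpos : ∀ k, 0 < τk k := fun k => (hτ k) ▸ (hτc k (ik k)).1
  have hτle1 : ∀ k, τk k ≤ 1 := fun k => (hτ k) ▸ (hτc k (ik k)).2
  -- membership of iterates
  have hcomb : ∀ k (t : ℝ), x k + t • d k = (1 - t) • x k + t • v k := by
    intro k t
    rw [hd k]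
    module
  have hxmem : ∀ k, x k ∈ s := by
    intro k
    induction k with
    | zero => exact hx0
    | succ n ih =>
      rw [hxsucc n, hcomb n]
      exact hs_cv ih (hvs n) (by linarith [hτle1 n]) (le_of_lt (hτpos n)) (by ring)
  -- sufficient decrease
  have hτdiv : ∀ k i, tauCand (FWgap f g s (x k)) (Lm k) (‖d k‖ ^ 2) i
      ≤ FWgap f g s (x k) / (2 * Lcand (Lm k) i * ‖d k‖ ^ 2) := fun k i => min_le_right _ _
  have hdesc : ∀ k, f (x (k+1)) + g (x (k+1))
      ≤ f (x k) + g (x k) - (1/4) * (τk k * FWgap f g s (x k)) := by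
    intro k
    have h1 := (hik k).1
    have hL := hLcpos k (ik k)
    have hn := hnd2 k
    have hτ2 := hτdiv k (ik k)
    set τ := tauCand (FWgap f g s (x k)) (Lm k) (‖d k‖ ^ 2) (ik k) with hτdef
    have hτpos' : 0 < τ := (hτc k (ik k)).1
    have hmul : τ * (2 * Lcand (Lm k) (ik k) * ‖d k‖ ^ 2) ≤ FWgap f g s (x k) := by
      rw [← le_div_iff₀ (by positivity)]
      exact hτ2
    have hx1 : x (k+1) = x k + τ • d k := by rw [hxsucc k, hτ k]
    rw [hx1]
    have hG := hGpos k
    nlinarith [h1, hτ k, mul_le_mul_of_nonneg_left hmul (le_of_lt hτpos'),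
      sq_nonneg τ]
  have hτGpos : ∀ k, 0 < τk k * FWgap f g s (x k) :=
    fun k => mul_pos (hτpos k) (hGpos k)
  have hkey : ∀ k, f (x k) + g (x k) + (1/4) * ∑ l ∈ Finset.range k,
      (τk l * FWgap f g s (x l)) ≤ f (x 0) + g (x 0) := by
    intro k
    induction k with
    | zero => simp
    | succ n ih =>
      rw [Finset.sum_range_succ]
      have := hdesc n
      linarith
  have hFle0 : ∀ k, f (x k) + g (x k) ≤ f (x 0) + g (x 0) := by
    intro k
    have := hkey k
    have hnn : (0:ℝ) ≤ ∑ l ∈ Finset.range k, (τk l * FWgap f g s (x l)) :=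
      Finset.sum_nonneg fun l _ => le_of_lt (hτGpos l)
    linarith
  have hsumbdd : ∀ k, ∑ l ∈ Finset.range k, (τk l * FWgap f g s (x l))
      ≤ 4 * (f (x 0) + g (x 0) - m) := by
    intro k
    have := hkey k
    have := hm' (x k) (hxmem k)
    linarith
  have hsummable : Summable (fun l => τk l * FWgap f g s (x l)) :=
    summable_of_sum_range_le (fun l => le_of_lt (hτGpos l)) hsumbdd
  have htend0 : Filter.Tendsto (fun l => τk l * FWgap f g s (x l)) Filter.atTop (nhds 0) :=
    hsummable.tendsto_atTop_zero
  -- boundedness of the iterates and search directions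
  obtain ⟨Rx, hRx⟩ := hlev.subset_closedBall 0
  have hxball : ∀ k, ‖x k‖ ≤ Rx := fun k =>
    mem_closedBall_zero_iff.1 (hRx ⟨hxmem k, hFle0 k⟩)
  have hRx0 : 0 ≤ Rx := le_trans (norm_nonneg (x 0)) (hxball 0)
  have hKxc : IsCompact (s ∩ Metric.closedBall 0 Rx) :=
    (isCompact_closedBall (0:E) Rx).inter_left hs_cl
  have hgradc : ContinuousOn (gradient f) u := by
    have h1 : ContinuousOn (fderiv ℝ f) u := hfC1.continuousOn_fderiv_of_isOpen hu_open le_rfl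
    exact ((InnerProductSpace.toDual ℝ E).symm.continuous.comp_continuousOn h1 : _)
  have hKxu : s ∩ Metric.closedBall 0 Rx ⊆ u := fun z hz => hsu hz.1
  obtain ⟨C1, hC1⟩ := hKxc.exists_bound_of_continuousOn (hgradc.mono hKxu)
  have hxKx : ∀ k, x k ∈ s ∩ Metric.closedBall 0 Rx := fun k =>
    ⟨hxmem k, mem_closedBall_zero_iff.2 (hxball k)⟩
  have hC10 : 0 ≤ C1 := le_trans (norm_nonneg _) (hC1 _ (hxKx 0))
  obtain ⟨R, hR⟩ := hg_sc (C1 + 1)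
  have hvball : ∀ k, ‖v k‖ ≤ max (max R 1) (C1 * ‖x 0‖ + g (x 0)) := by
    intro k
    by_contra hcon
    push_neg at hcon
    have h1 : 1 < ‖v k‖ := lt_of_le_of_lt (le_trans (le_max_right R 1) (le_max_left _ _)) hcon
    have hRv : R ≤ ‖v k‖ :=
      le_of_lt (lt_of_le_of_lt (le_trans (le_max_left R 1) (le_max_left _ _)) hcon)
    have hg1 : (C1 + 1) * ‖v k‖ ≤ g (v k) := by
      have := hR (v k) (hvs k) hRv
      rw [le_div_iff₀ (by linarith)] at this
      linarith [this]
    have h2 := (hv k).2 (x 0) hx0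
    have h3 : ⟪gradient f (x k), x 0⟫ ≤ C1 * ‖x 0‖ := by
      calc ⟪gradient f (x k), x 0⟫ ≤ ‖gradient f (x k)‖ * ‖x 0‖ := real_inner_le_norm _ _
        _ ≤ C1 * ‖x 0‖ := mul_le_mul_of_nonneg_right (hC1 _ (hxKx k)) (norm_nonneg _)
    have h4 : -(C1 * ‖v k‖) ≤ ⟪gradient f (x k), v k⟫ := by
      have := abs_real_inner_le_norm (gradient f (x k)) (v k)
      have h5 : ‖gradient f (x k)‖ * ‖v k‖ ≤ C1 * ‖v k‖ :=
        mul_le_mul_of_nonneg_right (hC1 _ (hxKx k)) (norm_nonneg _)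
      have := (abs_le.1 this).1
      linarith
    have hB : ‖v k‖ ≤ C1 * ‖x 0‖ + g (x 0) := by nlinarith
    exact absurd (lt_of_le_of_lt (le_trans hB (le_max_right _ _)) hcon) (lt_irrefl _)
  set Rv := max (max R 1) (C1 * ‖x 0‖ + g (x 0)) with hRvdef
  set Rm := max Rx Rv with hRmdef
  have hRm0 : 0 ≤ Rm := le_trans hRx0 (le_max_left _ _)
  set K := s ∩ Metric.closedBall 0 Rm with hKdef
  have hKc : IsCompact K := (isCompact_closedBall (0:E) Rm).inter_left hs_cl
  have hKcv : Convex ℝ K := hs_cv.inter (convex_closedBall 0 Rm)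
  have hKu : K ⊆ u := fun z hz => hsu hz.1
  have hxK : ∀ k, x k ∈ K := fun k =>
    ⟨hxmem k, mem_closedBall_zero_iff.2 (le_trans (hxball k) (le_max_left _ _))⟩
  have hvK : ∀ k, v k ∈ K := fun k =>
    ⟨hvs k, mem_closedBall_zero_iff.2 (le_trans (hvball k) (le_max_right _ _))⟩
  set D := 2 * Rm + 1 with hDdef
  have hD0 : 0 < D := by positivity
  have hdD : ∀ k, ‖d k‖ ≤ D := by
    intro k
    rw [hd k]
    calc ‖v k - x k‖ ≤ ‖v k‖ + ‖x k‖ := norm_sub_le _ _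
      _ ≤ D := by
          have h1 := le_trans (hvball k) (le_max_right Rx Rv)
          have h2 := le_trans (hxball k) (le_max_left Rx Rv)
          have h3 : Rm = Rx ⊔ Rv := hRmdef
          have h4 : D = 2 * Rm + 1 := hDdef
          linarith
  obtain ⟨Cf, hCf⟩ := hKc.exists_bound_of_continuousOn (hfC1.continuousOn.mono hKu)
  obtain ⟨C2, hC2⟩ := hKc.exists_bound_of_continuousOn (hgradc.mono hKu)
  have hC20 : 0 ≤ C2 := le_trans (norm_nonneg _) (hC2 _ (hxK 0))
  set Gm := C2 * D + (f (x 0) + g (x 0) + Cf) + (Cf - m) with hGmdef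
  have hGm : ∀ k, FWgap f g s (x k) ≤ Gm := by
    intro k
    rw [hGeq k]
    have h1 : ⟪gradient f (x k), x k - v k⟫ ≤ C2 * D := by
      calc ⟪gradient f (x k), x k - v k⟫ ≤ ‖gradient f (x k)‖ * ‖x k - v k‖ :=
            real_inner_le_norm _ _
        _ ≤ C2 * D := by
            have h2 : ‖x k - v k‖ = ‖d k‖ := by rw [hd k, norm_sub_rev]
            have := hdD k
            nlinarith [norm_nonneg (x k - v k), hC2 _ (hxK k), norm_nonneg (gradient f (x k))]
    have h2 : g (x k) ≤ f (x 0) + g (x 0) + Cf := by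
      have ha := hFle0 k
      have hb := hCf (x k) (hxK k)
      rw [Real.norm_eq_abs] at hb
      have := (abs_le.1 hb).1
      linarith
    have h3 : m - Cf ≤ g (v k) := by
      have ha := hm' (v k) (hvs k)
      have hb := hCf (v k) (hvK k)
      rw [Real.norm_eq_abs] at hb
      have := (abs_le.1 hb).2
      linarith
    linarith
  have hGm0 : 0 < Gm := lt_of_lt_of_le (hGpos 0) (hGm 0)
  have hUC : ∀ η : ℝ, 0 < η → ∃ δ : ℝ, 0 < δ ∧ ∀ a ∈ K, ∀ b ∈ K, dist a b < δ →
      ‖gradient f a - gradient f b‖ < η := by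
    intro η hη
    have huc := hKc.uniformContinuousOn_of_continuous (hgradc.mono hKu)
    rw [Metric.uniformContinuousOn_iff] at huc
    obtain ⟨δ, hδ0, hδ⟩ := huc η hη
    exact ⟨δ, hδ0, fun a ha b hb hab => by
      have := hδ a ha b hb hab
      rwa [dist_eq_norm] at this⟩
  clear_value Rv Rm K D Gm
  -- the gap is frequently small
  have hfreq : ∀ ε : ℝ, 0 < ε → ∀ N : ℕ, ∃ k, N ≤ k ∧ FWgap f g s (x k) < ε := by
    intro ε hε N
    by_contra hcon
    push_neg at hcon
    obtain ⟨δ, hδ0, hδ⟩ := hUC (ε / (4 * D)) (div_pos hε (by linarith [hD0]))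
    have hδ2 : (0:ℝ) < δ ^ 2 := pow_pos hδ0 2
    have hD2 : (0:ℝ) < D ^ 2 := pow_pos hD0 2
    set c := Gm / δ ^ 2 + 1 with hcdef
    have hc0 : 0 < c := by
      have := div_pos hGm0 hδ2
      rw [hcdef]; linarith
    clear_value c
    -- eventually L is large
    have hNc : ∃ N2, N ≤ N2 ∧ ∀ k, N2 ≤ k → c < Lm (k + 1) := by
      have h2cD : (0:ℝ) < 2 * c * D ^ 2 := by nlinarith [mul_pos hc0 hD2]
      have hpos : 0 < min ε (ε ^ 2 / (2 * c * D ^ 2)) :=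
        lt_min hε (div_pos (pow_pos hε 2) h2cD)
      have hsmall : ∀ᶠ k in Filter.atTop,
          τk k * FWgap f g s (x k) < min ε (ε ^ 2 / (2 * c * D ^ 2)) :=
        htend0.eventually (gt_mem_nhds hpos)
      obtain ⟨N1, hN1⟩ := Filter.eventually_atTop.1 hsmall
      refine ⟨max N N1, le_max_left _ _, ?_⟩
      intro k hk
      have hkN : N ≤ k := le_trans (le_max_left _ _) hk
      have hkN1 : N1 ≤ k := le_trans (le_max_right _ _) hk
      have hεk : ε ≤ FWgap f g s (x k) := hcon k hkN
      have hsm := hN1 k hkN1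
      have hsm1 : τk k * FWgap f g s (x k) < ε := lt_of_lt_of_le hsm (min_le_left _ _)
      have hsm2 : τk k * FWgap f g s (x k) < ε ^ 2 / (2 * c * D ^ 2) :=
        lt_of_lt_of_le hsm (min_le_right _ _)
      have hτlt1 : τk k < 1 := by nlinarith [hτpos k, hGpos k]
      have hτeq : τk k = FWgap f g s (x k) / (2 * Lcand (Lm k) (ik k) * ‖d k‖ ^ 2) := by
        rw [hτ k] at hτlt1 ⊢
        unfold tauCand at hτlt1 ⊢
        rcases min_cases (1:ℝ) (FWgap f g s (x k) / (2 * Lcand (Lm k) (ik k) * ‖d k‖ ^ 2)) with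
          ⟨he, _⟩ | ⟨he, _⟩
        · rw [he] at hτlt1; exact absurd hτlt1 (lt_irrefl _)
        · exact he
      have hLc := hLcpos k (ik k)
      have hnd := hnd2 k
      have hG := hGpos k
      set L1 := Lcand (Lm k) (ik k) with hL1def
      have h2Ln : (0:ℝ) < 2 * L1 * ‖d k‖ ^ 2 := mul_pos (mul_pos two_pos hLc) hnd
      have hcancel : τk k * (2 * L1 * ‖d k‖ ^ 2) = FWgap f g s (x k) := by
        rw [hτeq]
        exact div_mul_cancel₀ _ (ne_of_gt h2Ln)
      clear_value L1
      have hdD' := hdD k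
      have hnd2D : ‖d k‖ ^ 2 ≤ D ^ 2 := by nlinarith [norm_nonneg (d k)]
      have hτkpos := hτpos k
      rw [hLsucc k, ← hL1def]
      rw [lt_div_iff₀ (by nlinarith [mul_pos hc0 hD2] : (0:ℝ) < 2 * c * D ^ 2)] at hsm2
      have h2 : ε ^ 2 ≤ FWgap f g s (x k) ^ 2 := by nlinarith
      have h3 : FWgap f g s (x k) ^ 2 = τk k * FWgap f g s (x k) * (2 * L1 * ‖d k‖ ^ 2) := by
        rw [mul_assoc (τk k), mul_comm (FWgap f g s (x k)), ← mul_assoc, hcancel, sq]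
      have h4 : τk k * FWgap f g s (x k) * (2 * L1 * ‖d k‖ ^ 2)
          ≤ τk k * FWgap f g s (x k) * (2 * L1 * D ^ 2) := by
        have hp : 0 < τk k * FWgap f g s (x k) * (2 * L1) :=
          mul_pos (mul_pos hτkpos hG) (by linarith)
        nlinarith [mul_le_mul_of_nonneg_left hnd2D (le_of_lt hp)]
      have hfin : τk k * FWgap f g s (x k) * (2 * c * D ^ 2)
          < τk k * FWgap f g s (x k) * (2 * L1 * D ^ 2) := by linarith
      have hp2 : 0 < τk k * FWgap f g s (x k) * (2 * D ^ 2) := by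
        nlinarith [mul_pos (mul_pos hτkpos hG) hD2]
      nlinarith [hfin, hp2]
    obtain ⟨N2, hNN2, hN2⟩ := hNc
    -- find an index with a failed backtracking step
    have hik1 : ∃ k0, N2 ≤ k0 ∧ 1 ≤ ik k0 := by
      by_contra hcon2
      push_neg at hcon2
      have hhalf : ∀ j : ℕ, Lm (N2 + 1 + j) = Lm (N2 + 1) / 2 ^ j := by
        intro j
        induction j with
        | zero => simp
        | succ n ihn =>
          have hnn : N2 + 1 + (n + 1) = (N2 + 1 + n) + 1 := by omega
          rw [hnn, hLsucc]
          have hik0 : ik (N2 + 1 + n) = 0 := Nat.lt_one_iff.mp (hcon2 _ (by omega))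
          rw [hik0]
          unfold Lcand
          rw [ihn, pow_succ]
          ring
      obtain ⟨j, hj⟩ := pow_unbounded_of_one_lt (Lm (N2 + 1) / c) (one_lt_two (α := ℝ))
      have h1 := hN2 (N2 + j) (by omega)
      have h2 : N2 + j + 1 = N2 + 1 + j := by omega
      rw [h2, hhalf j] at h1
      have h2p : (0 : ℝ) < 2 ^ j := by positivity
      rw [lt_div_iff₀ h2p] at h1
      rw [div_lt_iff₀ hc0] at hj
      nlinarith
    obtain ⟨k0, hk0N, hik1'⟩ := hik1
    set j0 := ik k0 - 1 with hj0def
    have hj0lt : j0 < ik k0 := by omega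
    have hfail := not_le.mp ((hik k0).2 j0 hj0lt)
    set L2 := Lcand (Lm k0) j0 with hL2def
    have hL2pos : 0 < L2 := hLcpos k0 j0
    have hL2eq : L2 = Lm (k0 + 1) / 2 := by
      rw [hLsucc k0, hL2def]
      unfold Lcand
      have hik0 : ik k0 = j0 + 1 := by omega
      rw [hik0, pow_succ]
      ring
    set τ2 := tauCand (FWgap f g s (x k0)) (Lm k0) (‖d k0‖ ^ 2) j0 with hτ2def
    have hτ2pos : 0 < τ2 := (hτc k0 j0).1
    have hτ2le1 : τ2 ≤ 1 := (hτc k0 j0).2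
    have hτ2div : τ2 ≤ FWgap f g s (x k0) / (2 * L2 * ‖d k0‖ ^ 2) := hτdiv k0 j0
    clear_value j0 L2 τ2
    have hcL : Gm / δ ^ 2 < 2 * L2 := by
      have h1 := hN2 k0 hk0N
      rw [hL2eq]
      rw [hcdef] at h1
      linarith
    have hnd := hnd2 k0
    have hG' := hGpos k0
    have hstep : τ2 * ‖d k0‖ < δ := by
      have h2Ln : (0:ℝ) < 2 * L2 * ‖d k0‖ ^ 2 := mul_pos (mul_pos two_pos hL2pos) hnd
      have hkey : τ2 * (2 * L2 * ‖d k0‖ ^ 2) ≤ FWgap f g s (x k0) := by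
        rw [← le_div_iff₀ h2Ln]
        exact hτ2div
      have h1 : (τ2 * ‖d k0‖) ^ 2 * (2 * L2) ≤ Gm := by
        nlinarith [hGm k0, hkey, hτ2pos, hτ2le1, le_of_lt hG']
      by_contra hge
      push_neg at hge
      have h2 : δ ^ 2 ≤ (τ2 * ‖d k0‖) ^ 2 := by nlinarith [hδ0]
      have h3 : Gm < 2 * L2 * δ ^ 2 := by
        rw [div_lt_iff₀ hδ2] at hcL
        linarith
      nlinarith [hL2pos]
    have hsegK : ∀ t ∈ Set.Icc (0:ℝ) τ2, x k0 + t • d k0 ∈ K := by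
      intro t ht
      rw [hcomb k0 t]
      exact hKcv (hxK k0) (hvK k0) (by linarith [ht.2, hτ2le1]) ht.1 (by ring)
    have hCseg : ∀ t ∈ Set.Icc (0:ℝ) τ2,
        ‖gradient f (x k0 + t • d k0) - gradient f (x k0)‖ ≤ ε / (4 * D) := by
      intro t ht
      have hdist : dist (x k0 + t • d k0) (x k0) < δ := by
        rw [dist_eq_norm, add_sub_cancel_left, norm_smul, Real.norm_eq_abs,
          abs_of_nonneg ht.1]
        calc t * ‖d k0‖ ≤ τ2 * ‖d k0‖ :=
              mul_le_mul_of_nonneg_right ht.2 (norm_nonneg _)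
          _ < δ := hstep
      exact le_of_lt (hδ _ (hsegK t ht) _ (hxK k0) hdist)
    have hde := descent_est hu_open hfC1 (le_of_lt hτ2pos)
      (fun t ht => hKu (hsegK t ht)) hCseg
    have hgc : g (x k0 + τ2 • d k0) ≤ (1 - τ2) * g (x k0) + τ2 * g (v k0) := by
      rw [hcomb k0 τ2]
      exact hg_cv.2 (hxmem k0) (hvs k0) (by linarith) (le_of_lt hτ2pos) (by ring)
    have hinner : ⟪gradient f (x k0), d k0⟫ = -⟪gradient f (x k0), x k0 - v k0⟫ := by
      rw [hd k0, inner_sub_right, inner_sub_right]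
      ring
    have hG0 := hGeq k0
    have hdd : ε / (4 * D) * ‖d k0‖ * τ2 ≤ ε / 4 * τ2 := by
      have h1 : ε / (4 * D) * ‖d k0‖ ≤ ε / 4 := by
        rw [div_mul_eq_mul_div, div_le_div_iff₀ (by linarith [hD0]) (by norm_num)]
        nlinarith [hdD k0, hε, hD0, norm_nonneg (d k0)]
      nlinarith [hτ2pos]
    have hid : τ2 * ⟪gradient f (x k0), x k0 - v k0⟫
        = τ2 * FWgap f g s (x k0) - τ2 * g (x k0) + τ2 * g (v k0) := by
      rw [hG0]; ring
    have hFub : f (x k0 + τ2 • d k0) + g (x k0 + τ2 • d k0)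
        ≤ f (x k0) + g (x k0) - τ2 * FWgap f g s (x k0) + ε / 4 * τ2 := by
      rw [hinner] at hde
      nlinarith [hde, hgc, hdd, hid]
    have hGε : ε ≤ FWgap f g s (x k0) := hcon k0 (le_trans hNN2 hk0N)
    have hL2τ : 0 ≤ 1 / 2 * L2 * τ2 ^ 2 * ‖d k0‖ ^ 2 := by positivity
    nlinarith [hfail, hFub, mul_le_mul_of_nonneg_left hGε (le_of_lt hτ2pos),
      mul_pos hτ2pos hε]
  -- build a subsequence along which the gap tends to 0
  have H : ∀ n N : ℕ, ∃ k, N ≤ k ∧ FWgap f g s (x k) < 1 / (n + 1) := fun n N =>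
    hfreq (1 / (n + 1)) (by positivity) N
  choose Kf hK1 hK2 using H
  set ψ : ℕ → ℕ := fun j => Nat.rec (Kf 0 0) (fun j prev => Kf (j + 1) (prev + 1)) j with hψdef
  have hψsucc : ∀ j, ψ (j + 1) = Kf (j + 1) (ψ j + 1) := fun j => rfl
  have hψmono : StrictMono ψ := strictMono_nat_of_lt_succ (fun j => by
    have h1 := hK1 (j + 1) (ψ j + 1)
    have h2 := hψsucc j
    omega)
  have hψG : ∀ j, FWgap f g s (x (ψ j)) < 1 / (j + 1) := by
    intro j
    cases j with
    | zero => exact hK2 0 0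
    | succ n =>
      have h2 := hψsucc n
      rw [h2]
      exact hK2 (n + 1) (ψ n + 1)
  obtain ⟨xstar, _, φ2, hφ2mono, hφ2tend⟩ := tendsto_subseq_of_bounded
    (Metric.isBounded_closedBall (x := (0:E)) (r := Rx))
    (fun j => mem_closedBall_zero_iff.2 (hxball (ψ j)))
  set φ : ℕ → ℕ := ψ ∘ φ2 with hφdef
  have hφmono : StrictMono φ := hψmono.comp hφ2mono
  have htendφ : Filter.Tendsto (fun j => x (φ j)) Filter.atTop (nhds xstar) := hφ2tend
  have hxstars : xstar ∈ s :=
    hs_cl.mem_of_tendsto htendφ (Filter.Eventually.of_forall fun j => hxmem _)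
  have hGφ : ∀ j, FWgap f g s (x (φ j)) < 1 / (j + 1) := by
    intro j
    refine lt_of_lt_of_le (hψG (φ2 j)) ?_
    have hj : (j:ℝ) + 1 ≤ (φ2 j : ℝ) + 1 := by
      have := hφ2mono.le_apply (x := j)
      have := (Nat.cast_le (α := ℝ)).2 this
      linarith
    exact one_div_le_one_div_of_le (by positivity) hj
  -- the limit point is stationary
  have hstat : ∀ w ∈ s, ⟪gradient f xstar, xstar - w⟫ + g xstar - g w ≤ 0 := by
    intro w hw
    by_contra hcw
    push_neg at hcw
    set cst := ⟪gradient f xstar, xstar - w⟫ + g xstar - g w with hcst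
    have hcontg : Filter.Tendsto (fun j => ⟪gradient f (x (φ j)), x (φ j) - w⟫)
        Filter.atTop (nhds ⟪gradient f xstar, xstar - w⟫) := by
      have hgr : Filter.Tendsto (fun j => gradient f (x (φ j))) Filter.atTop
          (nhds (gradient f xstar)) :=
        ((hgradc.continuousAt (hu_open.mem_nhds (hsu hxstars))).tendsto).comp htendφ
      exact hgr.inner (htendφ.sub tendsto_const_nhds)
    have hev1 : ∀ᶠ j in Filter.atTop,
        ⟪gradient f xstar, xstar - w⟫ - cst / 3 < ⟪gradient f (x (φ j)), x (φ j) - w⟫ :=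
      hcontg.eventually (eventually_gt_nhds (by linarith))
    have htendφ' : Filter.Tendsto (fun j => x (φ j)) Filter.atTop (nhdsWithin xstar s) :=
      tendsto_nhdsWithin_of_tendsto_nhds_of_eventually_within _ htendφ
        (Filter.Eventually.of_forall fun j => hxmem _)
    have hev2 : ∀ᶠ j in Filter.atTop, g xstar - cst / 3 < g (x (φ j)) :=
      htendφ' (hg_lsc xstar hxstars (g xstar - cst / 3) (by linarith))
    have hev3 : ∀ᶠ j : ℕ in Filter.atTop, FWgap f g s (x (φ j)) < cst / 3 := by
      obtain ⟨n, hn⟩ := exists_nat_gt (3 / cst)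
      refine Filter.eventually_atTop.2 ⟨n, fun j hj => ?_⟩
      refine lt_of_lt_of_le (hGφ j) ?_
      have hjn : (3:ℝ) / cst < (j:ℝ) + 1 := by
        have := (Nat.cast_le (α := ℝ)).2 hj
        linarith
      rw [div_lt_iff₀ hcw] at hjn
      rw [div_le_div_iff₀ (by positivity) (by norm_num : (0:ℝ) < 3)]
      nlinarith
    obtain ⟨j, h1, h2, h3⟩ := (hev1.and (hev2.and hev3)).exists
    have h5 := hGle (φ j) w hw
    linarith [h1, h2, h3, h5, hcst]
  have hGstar : FWgap f g s xstar = 0 := by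
    have hub : ∀ wv : s, ⟪gradient f xstar, xstar - (wv : E)⟫ + g xstar - g (wv : E) ≤ 0 :=
      fun wv => hstat wv wv.2
    have hbdd0 : BddAbove (Set.range fun wv : s =>
        ⟪gradient f xstar, xstar - (wv : E)⟫ + g xstar - g (wv : E)) := by
      refine ⟨0, ?_⟩
      rintro y ⟨wv, rfl⟩
      exact hub wv
    refine le_antisymm (ciSup_le hub) ?_
    have h0 := le_ciSup hbdd0 ⟨xstar, hxstars⟩
    simp only [sub_self, inner_zero_right, zero_add] at h0
    exact h0
  constructor
  · exact ⟨xstar, ⟨φ, hφmono, htendφ⟩, hGstar⟩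
  · rw [Metric.tendsto_atTop]
    intro ε hε
    obtain ⟨k0, _, hGk0⟩ := hfreq ε hε 0
    refine ⟨k0, fun k hk => ?_⟩
    have hle : (Finset.range (k + 1)).inf' Finset.nonempty_range_add_one
        (fun l => FWgap f g s (x l)) ≤ FWgap f g s (x k0) :=
      Finset.inf'_le _ (Finset.mem_range.2 (by omega))
    have hge : (0:ℝ) ≤ (Finset.range (k + 1)).inf' Finset.nonempty_range_add_one
        (fun l => FWgap f g s (x l)) :=
      Finset.le_inf' _ _ (fun l _ => le_of_lt (hGpos l))
    rw [Real.dist_eq, sub_zero, abs_of_nonneg hge]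
    exact lt_of_le_of_lt hle hGk0
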